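/- (Key step of the cohomology computation for the supercharge.) Let V be a module over a commutative ring with an internal direct sum decomposition V = V₁ ⊕ V₀ (V₁, V₀ submodules). Let Q, Q̃ : V → V be linear maps with Q∘Q = 0, Q̃∘Q̃ = 0, Q(V₀) ⊆ V₁ and Q̃(V₀) ⊆ V₁ (vanishing of the V₀→V₀ blocks). Set Y := Q∘Q̃ + Q̃∘Q and assume Y(V₁) ⊆ V₁, Y(V₀) ⊆ V₀, and that the restriction of Y to V₁ is a bijection of V₁ onto itself. Then every Φ ∈ ker Q can be written as Φ = Qψ + Φ̃ with ψ ∈ V and Φ̃ ∈ V₀; i.e., for every Φ with QΦ = 0 there exists ψ ∈ V such that Φ − Qψ ∈ V₀. -/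
import Mathlib


/-- Key step of the cohomology computation for the supercharge: if `V = V₁ ⊕ V₀`,
`Q² = 0`, `Q̃² = 0`, the `V₀ → V₀` blocks of `Q` and `Q̃` vanish (`Q(V₀) ⊆ V₁`,
`Q̃(V₀) ⊆ V₁`), the anticommutator `Y = Q∘Q̃ + Q̃∘Q` preserves both `V₁` and `V₀`,
and `Y` restricted to `V₁` is bijective, then every `Q`-closed vector `Φ` can be
written as `Φ = Qψ + Φ̃` with `Φ̃ ∈ V₀`. -/
theorem closed_vector_ghost_free_mod_exact
    {R : Type*} [CommRing R] {V : Type*} [AddCommGroup V] [Module R V]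
    (V1 V0 : Submodule R V) (hcompl : IsCompl V1 V0)
    (Q Qt : V →ₗ[R] V) (hQ2 : Q ∘ₗ Q = 0) (hQt2 : Qt ∘ₗ Qt = 0)
    (hQ0 : ∀ x ∈ V0, Q x ∈ V1) (hQt0 : ∀ x ∈ V0, Qt x ∈ V1)
    (hY1 : ∀ x ∈ V1, (Q ∘ₗ Qt + Qt ∘ₗ Q) x ∈ V1)
    (hY0 : ∀ x ∈ V0, (Q ∘ₗ Qt + Qt ∘ₗ Q) x ∈ V0)
    (hYbij : Function.Bijective ((Q ∘ₗ Qt + Qt ∘ₗ Q).restrict hY1)) :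
    ∀ Φ : V, Q Φ = 0 → ∃ ψ : V, Φ - Q ψ ∈ V0 := by
  intro Φ hΦ
  have hQQ : ∀ v : V, Q (Q v) = 0 := fun v => congrFun (congrArg DFunLike.coe hQ2) v
  have hQtQt : ∀ v : V, Qt (Qt v) = 0 := fun v => congrFun (congrArg DFunLike.coe hQt2) v
  set Y : V →ₗ[R] V := Q ∘ₗ Qt + Qt ∘ₗ Q with hYdef
  have hYap : ∀ v : V, Y v = Q (Qt v) + Qt (Q v) := fun v => rfl
  -- decompose Φ = φ₁ + φ₀
  obtain ⟨φ₁, hφ₁, φ₀, hφ₀, hsum⟩ :=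
    Submodule.mem_sup.mp (show Φ ∈ V1 ⊔ V0 by rw [hcompl.sup_eq_top]; trivial)
  have hclosed : Q φ₁ = - Q φ₀ := by
    have h : Q φ₁ + Q φ₀ = 0 := by rw [← map_add, hsum, hΦ]
    exact eq_neg_of_add_eq_zero_left h
  -- χ ∈ V1 with Y χ = φ₁
  obtain ⟨χs, hχs⟩ := hYbij.2 ⟨φ₁, hφ₁⟩
  have hYχ : Y χs.1 = φ₁ := congrArg Subtype.val hχs
  have hχ1 : (χs : V) ∈ V1 := χs.2
  -- η ∈ V1 with Y η = Qt φ₀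
  obtain ⟨ηs, hηs⟩ := hYbij.2 ⟨Qt φ₀, hQt0 φ₀ hφ₀⟩
  have hYη : Y ηs.1 = Qt φ₀ := congrArg Subtype.val hηs
  set χ : V := χs.1
  set η : V := ηs.1
  refine ⟨Qt χ + η, ?_⟩
  -- the remainder
  set w : V := Qt (Q χ) - Q η with hw
  have hrem : Φ - Q (Qt χ + η) = φ₀ + w := by
    have h1 : Q (Qt χ) = φ₁ - Qt (Q χ) := by
      have h := hYap χ
      rw [hYχ] at h
      rw [h]; abel
    rw [← hsum, map_add, h1, hw]; abel
  rw [hrem]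
  -- compute Y w
  have hYw : Y w = - Y φ₀ := by
    have e1 : Q (Qt (Q χ)) = Q φ₁ := by
      rw [← hYχ, hYap χ, map_add, hQQ, zero_add]
    have h1 : Y (Qt (Q χ)) = Qt (Q φ₁) := by
      rw [hYap, hQtQt, map_zero, zero_add, e1]
    have e2 : Q (Qt (Q η)) = Q (Qt φ₀) := by
      rw [← hYη, hYap η, map_add, hQQ, zero_add]
    have h2 : Y (Q η) = Q (Qt φ₀) := by
      rw [hYap, hQQ, map_zero, add_zero, e2]
    rw [hw, map_sub, h1, h2, hclosed, map_neg, hYap φ₀]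
    abel
  have hYwV0 : Y w ∈ V0 := by
    rw [hYw]; exact neg_mem (hY0 φ₀ hφ₀)
  -- decompose w and kill its V1 part
  obtain ⟨w₁, hw₁, w₀, hw₀, hwsum⟩ :=
    Submodule.mem_sup.mp (show w ∈ V1 ⊔ V0 by rw [hcompl.sup_eq_top]; trivial)
  have hYw₁0 : Y w₁ = 0 := by
    have hmemV0 : Y w₁ ∈ V0 := by
      have : Y w₁ = Y w - Y w₀ := by rw [← hwsum, map_add]; abel
      rw [this]
      exact sub_mem hYwV0 (hY0 w₀ hw₀)
    exact (Submodule.disjoint_def.mp hcompl.disjoint) _ (hY1 w₁ hw₁) hmemV0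
  have hw₁0 : w₁ = 0 := by
    have : (Y.restrict hY1) ⟨w₁, hw₁⟩ = 0 := by
      apply Subtype.ext
      simpa [LinearMap.restrict_apply] using hYw₁0
    have := hYbij.1 (by rw [this, map_zero] : (Y.restrict hY1) ⟨w₁, hw₁⟩ = (Y.restrict hY1) 0)
    exact congrArg Subtype.val this
  have hwV0 : w ∈ V0 := by
    rw [← hwsum, hw₁0, zero_add]; exact hw₀
  exact add_mem hφ₀ hwV0
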